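/- If (P, F) is a Faigle geometry, then the lattice of flats (F, ⊆) is a finite semimodular lattice, with X ∧ Y = X ∩ Y and X ∨ Y = cl(X ∪ Y). -/

import Mathlib

/-- `X` is a down-set of the poset `P`. -/
def IsDownSet {P : Type*} [PartialOrder P] (X : Set P) : Prop :=
  ∀ ⦃x⦄, x ∈ X → ∀ ⦃y⦄, y ≤ x → y ∈ X

/-- `Y` covers `X` in the poset `(F, ⊆)`. -/
def CoversIn {P : Type*} (F : Set (Set P)) (X Y : Set P) : Prop :=
  X ⊂ Y ∧ ∀ Z ∈ F, ¬(X ⊂ Z ∧ Z ⊂ Y)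

/-- The closure operator associated to the closure system `F`:
`cl(X) = ⋂ {Y ∈ F : X ⊆ Y}`. -/
def clF {P : Type*} (F : Set (Set P)) (X : Set P) : Set P :=
  ⋂₀ {Y | Y ∈ F ∧ X ⊆ Y}

/-- `(P, F)` is a Faigle geometry. -/
structure IsFaigle {P : Type*} [PartialOrder P] [Finite P] (F : Set (Set P)) : Prop where
  univ_mem : Set.univ ∈ F
  inter_mem : ∀ X ∈ F, ∀ Y ∈ F, X ∩ Y ∈ F
  down : ∀ X ∈ F, IsDownSet X
  empty_mem : ∅ ∈ F
  Iic_mem : ∀ u : P, Set.Iic u ∈ F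
  Iio_mem : ∀ u : P, Set.Iio u ∈ F
  cp : ∀ (u : P), ∀ X ∈ F, u ∉ X → Set.Iio u ⊆ X →
      ∃ Y ∈ F, u ∈ Y ∧ CoversIn F X Y

lemma sInter_mem_aux {P : Type*} [Finite P] {F : Set (Set P)}
    (huniv : Set.univ ∈ F) (hinter : ∀ X ∈ F, ∀ Y ∈ F, X ∩ Y ∈ F)
    (S : Set (Set P)) (hS : S ⊆ F) : ⋂₀ S ∈ F := by
  refine Set.Finite.induction_on (motive := fun S _ => S ⊆ F → ⋂₀ S ∈ F) S (Set.toFinite S)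
    (fun _ => by simpa using huniv) ?_ hS
  intro a S _ _ ih hsub
  rw [Set.sInter_insert]
  exact hinter a (hsub (Set.mem_insert a S)) _ (ih (fun x hx => hsub (Set.mem_insert_of_mem a hx)))

lemma clF_mem {P : Type*} [Finite P] {F : Set (Set P)}
    (huniv : Set.univ ∈ F) (hinter : ∀ X ∈ F, ∀ Y ∈ F, X ∩ Y ∈ F)
    (Z : Set P) : clF F Z ∈ F :=
  sInter_mem_aux huniv hinter _ (fun _ h => h.1)

lemma subset_clF {P : Type*} {F : Set (Set P)} (Z : Set P) : Z ⊆ clF F Z :=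
  fun _ hz _ hW => hW.2 hz

lemma clF_subset {P : Type*} {F : Set (Set P)} {Z W : Set P} (hW : W ∈ F) (hZW : Z ⊆ W) :
    clF F Z ⊆ W :=
  Set.sInter_subset_of_mem ⟨hW, hZW⟩

/-- The lattice of flats `(F, ⊆)` of a Faigle geometry is a finite semimodular lattice,
with meet `X ∩ Y` and join `cl(X ∪ Y)`. -/
theorem flats_semimodular_lattice {P : Type*} [PartialOrder P] [Finite P]
    {F : Set (Set P)} (hF : IsFaigle F) :
    F.Finite ∧
    ∀ X ∈ F, ∀ Y ∈ F,
      -- the meet of `X` and `Y` in `(F, ⊆)` is `X ∩ Y`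
      (X ∩ Y ∈ F ∧ X ∩ Y ⊆ X ∧ X ∩ Y ⊆ Y ∧
        (∀ Z ∈ F, Z ⊆ X → Z ⊆ Y → Z ⊆ X ∩ Y)) ∧
      -- the join of `X` and `Y` in `(F, ⊆)` is `cl(X ∪ Y)`
      (clF F (X ∪ Y) ∈ F ∧ X ⊆ clF F (X ∪ Y) ∧ Y ⊆ clF F (X ∪ Y) ∧
        (∀ Z ∈ F, X ⊆ Z → Y ⊆ Z → clF F (X ∪ Y) ⊆ Z)) ∧
      -- semimodularity of `(F, ⊆)`
      (CoversIn F (X ∩ Y) X → CoversIn F Y (clF F (X ∪ Y))) := by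
  refine ⟨Set.toFinite F, fun X hX Y hY => ?_⟩
  have hclmem : clF F (X ∪ Y) ∈ F := clF_mem hF.univ_mem hF.inter_mem _
  have hXcl : X ⊆ clF F (X ∪ Y) := (Set.subset_union_left).trans (subset_clF _)
  have hYcl : Y ⊆ clF F (X ∪ Y) := (Set.subset_union_right).trans (subset_clF _)
  refine ⟨⟨hF.inter_mem X hX Y hY, Set.inter_subset_left, Set.inter_subset_right,
      fun Z _ h1 h2 => Set.subset_inter h1 h2⟩,
    ⟨hclmem, hXcl, hYcl, fun Z hZ h1 h2 => clF_subset hZ (Set.union_subset h1 h2)⟩, ?_⟩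
  intro hcov
  -- pick a minimal element of X \ Y
  have hne : (X \ Y).Nonempty := by
    rcases Set.exists_of_ssubset hcov.1 with ⟨u, huX, huXY⟩
    exact ⟨u, huX, fun hu => huXY ⟨huX, hu⟩⟩
  obtain ⟨u, huXY, humin⟩ := (Finite.to_wellFoundedLT (α := P)).wf.has_min (X \ Y) hne
  have huX : u ∈ X := huXY.1
  have huY : u ∉ Y := huXY.2
  have hIio : Set.Iio u ⊆ Y := by
    intro v hv
    have hvX : v ∈ X := hF.down X hX huX (le_of_lt hv)
    by_contra hvY
    exact humin v ⟨hvX, hvY⟩ hv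
  obtain ⟨W, hW, huW, hcovW⟩ := hF.cp u Y hY huY hIio
  have hYW : Y ⊆ W := hcovW.1.1
  -- X ⊆ W
  have hXW : X ⊆ W := by
    have hXWmem : X ∩ W ∈ F := hF.inter_mem X hX W hW
    have h1 : X ∩ Y ⊂ X ∩ W := by
      refine ⟨Set.inter_subset_inter_right X hYW, fun h => ?_⟩
      exact huY (h ⟨huX, huW⟩).2
    have h2 : ¬ (X ∩ W ⊂ X) := fun h2 => hcov.2 (X ∩ W) hXWmem ⟨h1, h2⟩
    have heq : X ∩ W = X := by
      rcases eq_or_ssubset_of_subset (Set.inter_subset_left : X ∩ W ⊆ X) with h | h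
      · exact h
      · exact absurd h h2
    exact heq ▸ (Set.inter_subset_right : X ∩ W ⊆ W)
  -- cl(X ∪ Y) = W
  have hclW : clF F (X ∪ Y) = W := by
    have hsub : clF F (X ∪ Y) ⊆ W := clF_subset hW (Set.union_subset hXW hYW)
    rcases eq_or_ssubset_of_subset hsub with h | h
    · exact h
    · exfalso
      apply hcovW.2 (clF F (X ∪ Y)) hclmem
      refine ⟨⟨hYcl, fun habs => huY (habs (hXcl huX))⟩, h⟩
  exact hclW ▸ hcovW
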